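/- Under the Poly(α) voting rule with α > 0, the voting power process (θ_{k,t})_{t≥0} of each bidder k is a strict supermartingale on the event {no one else's stake count changes}: E[θ_{k,t+1} | F_t] = θ_{k,t}·(1 - N_t^{-α} + (N_t+1)^{-α}) ≤ θ_{k,t}, with strict inequality when θ_{k,t} > 0 and α > 0. -/
import Mathlib


open Real

/-- Under the Poly(α) voting rule with α > 0, the voting power θ = p/N^α is a strict
supermartingale: its one-step conditional expectation equals
`θ·(1 - N^{-α} + (N+1)^{-α}) ≤ θ`, with strict inequality when `θ > 0`. -/
theorem stmt_2 (α N p : ℝ) (hα : 0 < α) (hN : 2 ≤ N) (hp0 : 0 ≤ p) (hp1 : p ≤ 1) :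
    (p / N ^ α) * (1 - 1 / N ^ α)
      + (N * p / (N + 1) ^ (1 + α)) * ((1 - p) / N ^ α)
      + ((N * p + 1) / (N + 1) ^ (1 + α)) * (p / N ^ α)
      = (p / N ^ α) * (1 - N ^ (-α) + (N + 1) ^ (-α)) ∧
    (p / N ^ α) * (1 - N ^ (-α) + (N + 1) ^ (-α)) ≤ p / N ^ α ∧
    (0 < p / N ^ α →
      (p / N ^ α) * (1 - N ^ (-α) + (N + 1) ^ (-α)) < p / N ^ α) := by
  have hN0 : (0:ℝ) < N := by linarith
  have hN1 : (0:ℝ) < N + 1 := by linarith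
  have hNa : (0:ℝ) < N ^ α := rpow_pos_of_pos hN0 α
  have hN1a : (0:ℝ) < (N + 1) ^ α := rpow_pos_of_pos hN1 α
  have hsplit : (N + 1) ^ (1 + α) = (N + 1) * (N + 1) ^ α := by
    rw [rpow_add hN1, rpow_one]
  have hneg1 : N ^ (-α) = 1 / N ^ α := by rw [rpow_neg hN0.le, one_div]
  have hneg2 : (N + 1) ^ (-α) = 1 / (N + 1) ^ α := by rw [rpow_neg hN1.le, one_div]
  have hlt : N ^ α < (N + 1) ^ α :=
    rpow_lt_rpow (by linarith) (by linarith) hα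
  refine ⟨?_, ?_, ?_⟩
  · rw [hsplit, hneg1, hneg2]
    field_simp
    ring
  · have hfac : 1 - N ^ (-α) + (N + 1) ^ (-α) ≤ 1 := by
      rw [hneg1, hneg2]
      have : 1 / (N + 1) ^ α ≤ 1 / N ^ α := by
        apply one_div_le_one_div_of_le hNa hlt.le
      linarith
    have hθ : 0 ≤ p / N ^ α := div_nonneg hp0 hNa.le
    nlinarith
  · intro hθ
    have hfac : 1 - N ^ (-α) + (N + 1) ^ (-α) < 1 := by
      rw [hneg1, hneg2]
      have : 1 / (N + 1) ^ α < 1 / N ^ α := by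
        apply one_div_lt_one_div_of_lt hNa hlt
      linarith
    nlinarith
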